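/- The nilpotent Lie algebra g_5 spanned by X_0, X_1, X_2, X_3, Y_1 with nonzero brackets [X_0,X_1]=X_2, [X_0,X_2]=X_3, [X_1,X_2]=Y_1 has characteristic sequence (3,1,1): the adjoint operator ad(X_0+X_1) restricted to the 5-dimensional algebra is nilpotent with Jordan block sizes (3,1,1), and no element X outside the derived subalgebra has adjoint operator with lexicographically larger Jordan block sequence. -/

import Mathlib

/-- Structure constants of the 5-dimensional nilpotent Lie algebra `g_5` with
basis `X_0 ↦ 0, X_1 ↦ 1, X_2 ↦ 2, X_3 ↦ 3, Y_1 ↦ 4` and nonzero brackets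
`[X_0,X_1] = X_2`, `[X_0,X_2] = X_3`, `[X_1,X_2] = Y_1` (listed direction). -/
noncomputable def strG5 (i j s : ℕ) : ℂ :=
  (if i = 0 ∧ (j = 1 ∨ j = 2) ∧ s = j + 1 then 1 else 0) +
  (if i = 1 ∧ j = 2 ∧ s = 4 then 1 else 0)

/-- Antisymmetrized structure constants of `g_5`. -/
noncomputable def CG5 (i j s : ℕ) : ℂ := strG5 i j s - strG5 j i s

/-- The matrix of the adjoint operator `ad(u)` of `g_5` on the basis:
`(adMat u).mulVec v` is the coordinate vector of `[u, v]`. -/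
noncomputable def adMat (u : Fin 5 → ℂ) : Matrix (Fin 5) (Fin 5) ℂ :=
  fun s j => ∑ i : Fin 5, u i * CG5 i.1 j.1 s.1

/-- The `k`-th basis vector of `ℂ^5`. -/
noncomputable def e (k : Fin 5) : Fin 5 → ℂ := Pi.single k 1

lemma fv3 : ((3 : Fin 5) : ℕ) = 3 := rfl
lemma fv4 : ((4 : Fin 5) : ℕ) = 4 := rfl

lemma adMat_eq (u : Fin 5 → ℂ) :
    adMat u = !![0,0,0,0,0; 0,0,0,0,0; -u 1, u 0,0,0,0; -u 2,0,u 0,0,0; 0,-u 2,u 1,0,0] := by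
  ext s j
  fin_cases s <;> fin_cases j <;>
    norm_num [adMat, CG5, strG5, Fin.sum_univ_five, Matrix.vecHead, Matrix.vecTail, fv3, fv4] <;> simp

lemma sq_eq (u : Fin 5 → ℂ) : (adMat u) ^ 2 =
    !![0,0,0,0,0; 0,0,0,0,0; 0,0,0,0,0;
       -(u 0 * u 1), u 0 * u 0,0,0,0; -(u 1 * u 1), u 0 * u 1,0,0,0] := by
  rw [pow_two, adMat_eq]
  ext s j
  fin_cases s <;> fin_cases j <;>
    simp [Matrix.mul_apply, Fin.sum_univ_five, Matrix.vecHead, Matrix.vecTail] <;> ring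

lemma cube_zero (u : Fin 5 → ℂ) : (adMat u) ^ 3 = 0 := by
  have : (adMat u) ^ 3 = (adMat u) ^ 2 * adMat u := by rw [pow_succ]
  rw [this, sq_eq, adMat_eq]
  ext s j
  fin_cases s <;> fin_cases j <;>
    simp [Matrix.mul_apply, Fin.sum_univ_five, Matrix.vecHead, Matrix.vecTail]

lemma rank_le_two (u : Fin 5 → ℂ) : (adMat u).rank ≤ 2 := by
  by_cases h : u 0 = 0
  · have hf : adMat u =
        (!![0,0;0,0;-u 1,0;-u 2,0;0,1] : Matrix (Fin 5) (Fin 2) ℂ) *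
        (!![1,0,0,0,0; 0,-u 2,u 1,0,0] : Matrix (Fin 2) (Fin 5) ℂ) := by
      rw [adMat_eq]
      ext s j
      fin_cases s <;> fin_cases j <;>
        simp [Matrix.mul_apply, Fin.sum_univ_two, Matrix.vecHead, Matrix.vecTail, h] <;> ring
    calc (adMat u).rank ≤ (!![0,0;0,0;-u 1,0;-u 2,0;0,1] : Matrix (Fin 5) (Fin 2) ℂ).rank := by
          rw [hf]; exact Matrix.rank_mul_le_left _ _
      _ ≤ 2 := (Matrix.rank_le_card_width _).trans (by simp)
  · have hf : adMat u =
        (!![0,0;0,0;1,0;0,1; -u 2 / u 0, u 1 / u 0] : Matrix (Fin 5) (Fin 2) ℂ) *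
        (!![-u 1, u 0,0,0,0; -u 2,0,u 0,0,0] : Matrix (Fin 2) (Fin 5) ℂ) := by
      rw [adMat_eq]
      ext s j
      fin_cases s <;> fin_cases j <;>
        simp [Matrix.mul_apply, Fin.sum_univ_two, Matrix.vecHead, Matrix.vecTail] <;> field_simp <;> ring
    calc (adMat u).rank
        ≤ (!![0,0;0,0;1,0;0,1; -u 2 / u 0, u 1 / u 0] : Matrix (Fin 5) (Fin 2) ℂ).rank := by
          rw [hf]; exact Matrix.rank_mul_le_left _ _
      _ ≤ 2 := (Matrix.rank_le_card_width _).trans (by simp)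

lemma e01_apply : (e 0 + e 1 : Fin 5 → ℂ) = ![1,1,0,0,0] := by
  ext i; fin_cases i <;> simp [e, Pi.single_apply]

/-- `g_5` has characteristic sequence `(3,1,1)`: the adjoint of the characteristic
vector `X_0 + X_1` is nilpotent with Jordan blocks of sizes `(3,1,1)` (equivalently
`ad(X)^3 = 0`, `rank ad(X) = 2`, `rank ad(X)^2 = 1` on the 5-dimensional space),
and for every `X` outside the derived subalgebra `span{X_2, X_3, Y_1}` the Jordan
block sequence of `ad(X)` is not lexicographically larger than `(3,1,1)`
(equivalently `ad(X)^3 = 0` and `rank ad(X) ≤ 2`). -/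
theorem g5_characteristic_sequence :
    (adMat (e 0 + e 1)) ^ 3 = 0 ∧
    (adMat (e 0 + e 1)).rank = 2 ∧
    ((adMat (e 0 + e 1)) ^ 2).rank = 1 ∧
    (∀ u : Fin 5 → ℂ, u ∉ Submodule.span ℂ {e 2, e 3, e 4} →
      (adMat u) ^ 3 = 0 ∧ (adMat u).rank ≤ 2) := by
  have hM : adMat (e 0 + e 1) =
      !![0,0,0,0,0; 0,0,0,0,0; -1,1,0,0,0; 0,0,1,0,0; 0,0,1,0,0] := by
    rw [adMat_eq, e01_apply]; norm_num; simp
  refine ⟨cube_zero _, ?_, ?_, fun u _ => ⟨cube_zero u, rank_le_two u⟩⟩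
  · refine le_antisymm (rank_le_two _) ?_
    have key : (!![0,0,1,0,0;0,0,0,1,0] : Matrix (Fin 2) (Fin 5) ℂ) *
        (adMat (e 0 + e 1) * (!![0,0;1,0;0,1;0,0;0,0] : Matrix (Fin 5) (Fin 2) ℂ)) = 1 := by
      rw [hM]
      ext s j
      fin_cases s <;> fin_cases j <;>
        simp [Matrix.mul_apply, Fin.sum_univ_five, Fin.sum_univ_two, Matrix.one_apply, Matrix.vecHead, Matrix.vecTail]
    calc (2 : ℕ) = ((1 : Matrix (Fin 2) (Fin 2) ℂ)).rank := by simp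
      _ = ((!![0,0,1,0,0;0,0,0,1,0] : Matrix (Fin 2) (Fin 5) ℂ) *
            (adMat (e 0 + e 1) * (!![0,0;1,0;0,1;0,0;0,0] : Matrix (Fin 5) (Fin 2) ℂ))).rank := by rw [key]
      _ ≤ (adMat (e 0 + e 1) * (!![0,0;1,0;0,1;0,0;0,0] : Matrix (Fin 5) (Fin 2) ℂ)).rank := Matrix.rank_mul_le_right _ _
      _ ≤ (adMat (e 0 + e 1)).rank := Matrix.rank_mul_le_left _ _
  · have hM2 : (adMat (e 0 + e 1)) ^ 2 =
        !![0,0,0,0,0; 0,0,0,0,0; 0,0,0,0,0; -1,1,0,0,0; -1,1,0,0,0] := by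
      rw [pow_two, hM]
      ext s j
      fin_cases s <;> fin_cases j <;> simp [Matrix.mul_apply, Fin.sum_univ_five, Matrix.vecHead, Matrix.vecTail]
    refine le_antisymm ?_ ?_
    · have hf : (adMat (e 0 + e 1)) ^ 2 =
          (!![(0:ℂ);0;0;1;1] : Matrix (Fin 5) (Fin 1) ℂ) *
          (!![(-1:ℂ),1,0,0,0] : Matrix (Fin 1) (Fin 5) ℂ) := by
        rw [hM2]
        ext s j
        fin_cases s <;> fin_cases j <;> simp [Matrix.mul_apply, Matrix.vecHead, Matrix.vecTail]
      calc ((adMat (e 0 + e 1)) ^ 2).rank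
          ≤ (!![(0:ℂ);0;0;1;1] : Matrix (Fin 5) (Fin 1) ℂ).rank := by
            rw [hf]; exact Matrix.rank_mul_le_left _ _
        _ ≤ 1 := (Matrix.rank_le_card_width _).trans (by simp)
    · have key : (!![(0:ℂ),0,0,1,0] : Matrix (Fin 1) (Fin 5) ℂ) *
          ((adMat (e 0 + e 1)) ^ 2 * (!![0;1;0;0;0] : Matrix (Fin 5) (Fin 1) ℂ)) = 1 := by
        rw [hM2]
        ext s j
        fin_cases s <;> fin_cases j <;>
          simp [Matrix.mul_apply, Fin.sum_univ_five, Matrix.one_apply, Matrix.vecHead, Matrix.vecTail]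
      calc (1 : ℕ) = ((1 : Matrix (Fin 1) (Fin 1) ℂ)).rank := by simp
        _ = ((!![(0:ℂ),0,0,1,0] : Matrix (Fin 1) (Fin 5) ℂ) *
              ((adMat (e 0 + e 1)) ^ 2 * (!![0;1;0;0;0] : Matrix (Fin 5) (Fin 1) ℂ))).rank := by rw [key]
        _ ≤ ((adMat (e 0 + e 1)) ^ 2 * (!![0;1;0;0;0] : Matrix (Fin 5) (Fin 1) ℂ)).rank := Matrix.rank_mul_le_right _ _
        _ ≤ ((adMat (e 0 + e 1)) ^ 2).rank := Matrix.rank_mul_le_left _ _
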